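/- Let d ≥ 2 and ε > 0. Define A(ε) ∈ ℝ^{d×d} by A(ε)_{ii} = 1/4 for 1 ≤ i ≤ d−1, A(ε)_{dj} = −ε/√(d−1) for 1 ≤ j ≤ d−1, and all other entries 0, and let a_d(ε) denote the d-th row of A(ε) viewed as a vector. Consider the process X_0 = 0, X_{t+1} = ReLU(A(ε) X_t) + η_t, where ReLU(x) = max(x, 0) is applied coordinatewise and the η_t are i.i.d. standard Gaussian N(0, I_d). Then there exist universal constants C₀, C₁ > 0 such that for every t ≥ 2: P(⟨a_d(ε), X_t⟩ > 0) ≤ C₀ exp(−C₁ d). -/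

import Mathlib

open MeasureTheory ProbabilityTheory Real Matrix
open scoped RealInnerProductSpace

noncomputable section

abbrev EVec (d : ℕ) := EuclideanSpace ℝ (Fin d)

def phiV {d : ℕ} (φ : ℝ → ℝ) (x : EVec d) : EVec d := WithLp.toLp 2 (fun i => φ (x i))

def mvE {d : ℕ} (A : Matrix (Fin d) (Fin d) ℝ) (x : EVec d) : EVec d :=
  Matrix.toEuclideanLin A x

/-- The standard Gaussian measure `N(0, I_d)` on `ℝ^d`. -/
def stdGaussianE (d : ℕ) : Measure (EVec d) :=
  (Measure.pi fun _ : Fin d => ProbabilityTheory.gaussianReal 0 1).map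
    (MeasurableEquiv.toLp 2 (Fin d → ℝ))

/-- The matrix `A(ε)` : `1/4` on the first `d−1` diagonal entries, `−ε/√(d−1)` on the first
`d−1` entries of the last row, zeros elsewhere. -/
def Aeps (d : ℕ) (ε : ℝ) : Matrix (Fin d) (Fin d) ℝ :=
  Matrix.of fun i j =>
    if i = j ∧ (i : ℕ) < d - 1 then (1 / 4 : ℝ)
    else if (i : ℕ) = d - 1 ∧ (j : ℕ) < d - 1 then -ε / Real.sqrt ((d : ℝ) - 1)
    else 0

namespace ReluAux
open scoped ENNReal NNReal


variable {ι : Type*} [Fintype ι] {α : ι → Type*} [mα : ∀ i, MeasurableSpace (α i)]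

lemma pi_inter_eval (ν : ∀ i, Measure (α i)) [∀ i, IsProbabilityMeasure (ν i)]
    (S : Finset ι) (sets : ∀ i, Set (α i)) (hsets : ∀ i ∈ S, MeasurableSet (sets i)) :
    Measure.pi ν (⋂ i ∈ S, (fun x : ∀ k, α k => x i) ⁻¹' sets i)
      = ∏ i ∈ S, ν i (sets i) := by
  classical
  have h1 : (⋂ i ∈ S, (fun x : ∀ k, α k => x i) ⁻¹' sets i)
      = Set.pi Set.univ (fun i => if i ∈ S then sets i else Set.univ) := by
    ext x
    simp only [Set.mem_iInter, Set.mem_preimage, Set.mem_pi, Set.mem_univ, true_imp_iff]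
    constructor
    · intro h i
      by_cases hi : i ∈ S
      · simpa [hi] using h i hi
      · simp [hi]
    · intro h i hi
      have := h i
      simpa [hi] using this
  rw [h1, Measure.pi_pi]
  rw [← Finset.prod_subset (Finset.subset_univ S) (fun i _ hi => by simp [hi])]
  exact Finset.prod_congr rfl fun i hi => by simp [hi]

lemma iIndepFun_eval_pi (ν : ∀ i, Measure (α i)) [∀ i, IsProbabilityMeasure (ν i)] :
    iIndepFun (fun i (x : ∀ k, α k) => x i) (Measure.pi ν) := by
  rw [iIndepFun_iff_measure_inter_preimage_eq_mul]
  intro S sets hsets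
  rw [pi_inter_eval ν S sets hsets]
  refine Finset.prod_congr rfl fun i hi => ?_
  have := pi_inter_eval ν {i} sets (by simpa using hsets i hi)
  simpa using this.symm

lemma map_eval_pi (ν : ∀ i, Measure (α i)) [∀ i, IsProbabilityMeasure (ν i)] (i : ι) :
    Measure.map (fun x : ∀ k, α k => x i) (Measure.pi ν) = ν i := by
  classical
  ext s hs
  rw [Measure.map_apply (measurable_pi_apply i) hs]
  have := pi_inter_eval ν {i} (Function.update (fun k => (Set.univ : Set (α k))) i s)
    (by intro k hk; simp only [Finset.mem_singleton] at hk; subst hk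
        simpa using hs)
  simpa using this

lemma iIndepFun_comp_map {Ω E : Type*} {ι' : Type*} [MeasurableSpace Ω] [MeasurableSpace E]
    {μ : Measure Ω} {P : Ω → E} (hP : Measurable P)
    {β : ι' → Type*} [mβ : ∀ i, MeasurableSpace (β i)] {g : ∀ i, E → β i}
    (hg : ∀ i, Measurable (g i))
    (h : iIndepFun g (Measure.map P μ)) :
    iIndepFun (fun i ω => g i (P ω)) μ := by
  rw [iIndepFun_iff_measure_inter_preimage_eq_mul] at h ⊢
  intro S sets hsets
  have h2 := h S hsets
  have hmeasInter : MeasurableSet (⋂ i ∈ S, g i ⁻¹' sets i) := by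
    have := MeasurableSet.biInter S.countable_toSet (f := fun i => g i ⁻¹' sets i)
      (fun i hi => (hg i) (hsets i hi))
    simpa using this
  rw [Measure.map_apply hP hmeasInter, Set.preimage_iInter₂] at h2
  rw [Finset.prod_congr rfl (fun i hi => Measure.map_apply hP ((hg i) (hsets i hi)))] at h2
  exact h2



lemma integral_gaussianReal01 (g : ℝ → ℝ) :
    ∫ x, g x ∂(gaussianReal 0 1) = ∫ x, gaussianPDFReal 0 1 x * g x := by
  rw [gaussianReal_of_var_ne_zero 0 one_ne_zero]
  have h1 : gaussianPDF 0 1 = fun x => ((Real.toNNReal (gaussianPDFReal 0 1 x) : ℝ≥0) : ℝ≥0∞) := rfl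
  rw [h1, integral_withDensity_eq_integral_smul (measurable_gaussianPDFReal 0 1).real_toNNReal g]
  congr 1
  ext x
  simp [NNReal.smul_def, Real.coe_toNNReal _ (gaussianPDFReal_nonneg 0 1 x)]

lemma gaussianPDFReal01_eq (x : ℝ) :
    gaussianPDFReal 0 1 x = (Real.sqrt (2 * π))⁻¹ * rexp (-(2⁻¹) * x ^ 2) := by
  rw [gaussianPDFReal]
  push_cast
  rw [mul_one, sub_zero]
  congr 1
  ring

lemma pdf_mul_exp (c x : ℝ) :
    gaussianPDFReal 0 1 x * rexp (c * x)
      = ((Real.sqrt (2 * π))⁻¹ * rexp (c ^ 2 / 2)) * rexp (-(2⁻¹) * (x - c) ^ 2) := by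
  rw [gaussianPDFReal01_eq, mul_assoc, ← Real.exp_add, mul_assoc, ← Real.exp_add]
  congr 2
  ring

lemma integrable_exp_mul_gaussianReal (c : ℝ) :
    Integrable (fun x => rexp (c * x)) (gaussianReal 0 1) := by
  rw [gaussianReal_of_var_ne_zero 0 one_ne_zero]
  rw [integrable_withDensity_iff (measurable_gaussianPDF 0 1)
    (ae_of_all _ fun x => ENNReal.ofReal_lt_top)]
  have h1 : (fun x => rexp (c * x) * (gaussianPDF 0 1 x).toReal)
      = fun x => ((Real.sqrt (2 * π))⁻¹ * rexp (c ^ 2 / 2)) * rexp (-(2⁻¹) * (x - c) ^ 2) := by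
    funext x
    rw [gaussianPDF, ENNReal.toReal_ofReal (gaussianPDFReal_nonneg 0 1 x), mul_comm,
      pdf_mul_exp]
  rw [h1]
  exact (((integrable_exp_neg_mul_sq (by norm_num : (0:ℝ) < 2⁻¹)).comp_sub_right c).const_mul _)

lemma integral_exp_mul_gaussianReal (c : ℝ) :
    ∫ x, rexp (c * x) ∂(gaussianReal 0 1) = rexp (c ^ 2 / 2) := by
  rw [integral_gaussianReal01]
  simp_rw [pdf_mul_exp c]
  rw [integral_const_mul, integral_sub_right_eq_self (fun x => rexp (-(2⁻¹) * x ^ 2)) c,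
    integral_gaussian]
  have h2 : Real.sqrt (π / 2⁻¹) = Real.sqrt (2 * π) := by norm_num [mul_comm]
  rw [h2, mul_assoc, mul_comm (rexp (c ^ 2 / 2)), ← mul_assoc,
    inv_mul_cancel₀ (by positivity : Real.sqrt (2 * π) ≠ 0), one_mul]


lemma sqrt_two_pi_lt : Real.sqrt (2 * π) < 2.51 := by
  have hπ : π < 3.15 := pi_lt_d2
  have h : (2 * π) < (2.51:ℝ) ^ 2 := by nlinarith
  calc Real.sqrt (2 * π) < Real.sqrt ((2.51:ℝ) ^ 2) :=
        Real.sqrt_lt_sqrt (by positivity) h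
    _ = 2.51 := Real.sqrt_sq (by norm_num)

lemma exp_two_lt : rexp 2 < 7.39 := by
  have h := Real.exp_one_lt_d9
  have h2 : rexp 2 = rexp 1 * rexp 1 := by rw [← Real.exp_add]; norm_num
  nlinarith [Real.exp_pos 1]

lemma gauss_tail : (1:ℝ)/20 ≤ ((gaussianReal 0 1) (Set.Icc 1 2)).toReal := by
  rw [gaussianReal_apply_eq_integral 0 one_ne_zero,
    ENNReal.toReal_ofReal (setIntegral_nonneg measurableSet_Icc
      (fun x _ => gaussianPDFReal_nonneg 0 1 x))]
  have hb : ∀ x ∈ Set.Icc (1:ℝ) 2,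
      (Real.sqrt (2 * π))⁻¹ * rexp (-2) ≤ gaussianPDFReal 0 1 x := by
    intro x hx
    rw [gaussianPDFReal01_eq]
    have h1 : (-2:ℝ) ≤ -(2⁻¹) * x ^ 2 := by nlinarith [hx.1, hx.2]
    have := Real.exp_le_exp.mpr h1
    have hs : (0:ℝ) < (Real.sqrt (2 * π))⁻¹ := by positivity
    nlinarith
  have hmono := setIntegral_mono_on (integrableOn_const (by
      rw [Real.volume_Icc]; norm_num))
    ((integrable_gaussianPDFReal 0 1).integrableOn) measurableSet_Icc hb
  have hconst : ∫ _ in Set.Icc (1:ℝ) 2, (Real.sqrt (2 * π))⁻¹ * rexp (-2)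
      = (Real.sqrt (2 * π))⁻¹ * rexp (-2) := by
    rw [setIntegral_const, measureReal_def, Real.volume_Icc]
    norm_num
  refine le_trans ?_ (hconst ▸ hmono)
  have h1 := sqrt_two_pi_lt
  have h2 := exp_two_lt
  have hs : (0:ℝ) < Real.sqrt (2 * π) := by positivity
  have he : (0:ℝ) < rexp 2 := Real.exp_pos 2
  rw [Real.exp_neg, ← mul_inv]
  have h3 : Real.sqrt (2 * π) * rexp 2 ≤ 20 := by nlinarith
  calc (1:ℝ)/20 = (20:ℝ)⁻¹ := by norm_num
    _ ≤ (Real.sqrt (2 * π) * rexp 2)⁻¹ := by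
        apply inv_anti₀ (by positivity) h3


lemma mgfR_bound :
    ∫ x, rexp (-(80:ℝ)⁻¹ * max (4⁻¹ * x) 0) ∂(gaussianReal 0 1) ≤ rexp (-(6420:ℝ)⁻¹) := by
  set ν := gaussianReal 0 1 with hν
  have hprob : IsProbabilityMeasure ν := by rw [hν]; infer_instance
  set q := (ν (Set.Icc 1 2)).toReal with hqdef
  have hq1 : (1:ℝ)/20 ≤ q := gauss_tail
  have hq2 : q ≤ 1 := by
    rw [hqdef]
    exact ENNReal.toReal_le_of_le_ofReal one_pos.le (by simpa using prob_le_one)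
  set c : ℝ := 1 - rexp (-(320:ℝ)⁻¹) with hc
  have hc0 : 0 ≤ c := by
    rw [hc]
    have : rexp (-(320:ℝ)⁻¹) ≤ 1 := Real.exp_le_one_iff.mpr (by norm_num)
    linarith
  have hind : Integrable (fun x => 1 - c * (Set.Icc (1:ℝ) 2).indicator (fun _ => (1:ℝ)) x) ν :=
    (integrable_const 1).sub (((integrable_const (1:ℝ)).indicator measurableSet_Icc).const_mul c)
  have hmeas : Measurable fun x : ℝ => rexp (-(80:ℝ)⁻¹ * max (4⁻¹ * x) 0) :=
    (((measurable_id.const_mul _).max measurable_const).const_mul _).exp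
  have step1 : ∫ x, rexp (-(80:ℝ)⁻¹ * max (4⁻¹ * x) 0) ∂ν
      ≤ ∫ x, (1 - c * (Set.Icc (1:ℝ) 2).indicator (fun _ => (1:ℝ)) x) ∂ν := by
    refine integral_mono_of_nonneg (ae_of_all _ fun x => (Real.exp_pos _).le) hind
      (ae_of_all _ fun x => ?_)
    by_cases hx : x ∈ Set.Icc (1:ℝ) 2
    · simp only [Set.indicator_of_mem hx]
      have h1 : (4:ℝ)⁻¹ ≤ max (4⁻¹ * x) 0 := le_trans (by nlinarith [hx.1]) (le_max_left _ _)
      have h2 : -(80:ℝ)⁻¹ * max (4⁻¹ * x) 0 ≤ -(320:ℝ)⁻¹ := by nlinarith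
      calc rexp (-(80:ℝ)⁻¹ * max (4⁻¹ * x) 0) ≤ rexp (-(320:ℝ)⁻¹) := Real.exp_le_exp.mpr h2
        _ = 1 - c * 1 := by rw [hc]; ring
    · simp only [Set.indicator_of_notMem hx]
      have h2 : -(80:ℝ)⁻¹ * max (4⁻¹ * x) 0 ≤ 0 := by
        have := le_max_right (4⁻¹ * x) 0
        nlinarith
      calc rexp (-(80:ℝ)⁻¹ * max (4⁻¹ * x) 0) ≤ rexp 0 := Real.exp_le_exp.mpr h2
        _ = 1 - c * 0 := by rw [Real.exp_zero]; ring
  have step2 : ∫ x, (1 - c * (Set.Icc (1:ℝ) 2).indicator (fun _ => (1:ℝ)) x) ∂ν = 1 - c * q := by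
    rw [integral_sub (integrable_const 1)
      (((integrable_const (1:ℝ)).indicator measurableSet_Icc).const_mul c),
      integral_const, integral_const_mul, integral_indicator_const _ measurableSet_Icc]
    simp [hqdef, measureReal_def]
  have hc1 : (321:ℝ)⁻¹ ≤ c := by
    have h1 := Real.add_one_le_exp ((320:ℝ)⁻¹)
    have h2 : rexp (-(320:ℝ)⁻¹) = (rexp ((320:ℝ)⁻¹))⁻¹ := by
      rw [← Real.exp_neg]
    have h3 : (0:ℝ) < rexp ((320:ℝ)⁻¹) := Real.exp_pos _
    rw [hc, h2]
    have h4 : (rexp ((320:ℝ)⁻¹))⁻¹ ≤ (1 + (320:ℝ)⁻¹)⁻¹ := by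
      apply inv_anti₀ (by norm_num) (by linarith)
    have h5 : ((1:ℝ) + (320:ℝ)⁻¹)⁻¹ = 320/321 := by norm_num
    linarith [h4.trans_eq h5]
  have step3 : 1 - c * q ≤ 1 - (6420:ℝ)⁻¹ := by
    have : (6420:ℝ)⁻¹ ≤ c * q := by
      calc (6420:ℝ)⁻¹ = (321:ℝ)⁻¹ * (1/20) := by norm_num
        _ ≤ c * q := by
            apply mul_le_mul hc1 hq1 (by norm_num) (le_trans (by norm_num) hc1)
    linarith
  have step4 : 1 - (6420:ℝ)⁻¹ ≤ rexp (-(6420:ℝ)⁻¹) := by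
    have := Real.add_one_le_exp (-(6420:ℝ)⁻¹)
    linarith
  calc ∫ x, rexp (-(80:ℝ)⁻¹ * max (4⁻¹ * x) 0) ∂ν
      ≤ ∫ x, (1 - c * (Set.Icc (1:ℝ) 2).indicator (fun _ => (1:ℝ)) x) ∂ν := step1
    _ = 1 - c * q := step2
    _ ≤ 1 - (6420:ℝ)⁻¹ := step3
    _ ≤ rexp (-(6420:ℝ)⁻¹) := step4

lemma exp_small_le_two : rexp ((13000:ℝ)⁻¹) ≤ 2 := by
  have h1 : rexp ((13000:ℝ)⁻¹) ≤ rexp (2⁻¹) := Real.exp_le_exp.mpr (by norm_num)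
  have h2 : rexp (2⁻¹) * rexp (2⁻¹) = rexp 1 := by rw [← Real.exp_add]; norm_num
  have h3 := Real.exp_one_lt_d9
  nlinarith [Real.exp_pos (2⁻¹:ℝ)]

lemma combine_exp : rexp (-(6420:ℝ)⁻¹) * rexp (((80:ℝ)⁻¹) ^ 2 / 2) ≤ rexp (-(13000:ℝ)⁻¹) := by
  rw [← Real.exp_add]
  apply Real.exp_le_exp.mpr
  norm_num


variable {Ω : Type} [MeasurableSpace Ω] {μ : Measure Ω} {d : ℕ} {f : Ω → EVec d}

lemma map_equiv_comp (hf : Measurable f) (hlaw : Measure.map f μ = stdGaussianE d) :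
    Measure.map (fun ω => ((MeasurableEquiv.toLp 2 (Fin d → ℝ)).symm) (f ω)) μ
      = Measure.pi (fun _ : Fin d => gaussianReal 0 1) := by
  rw [show (fun ω => ((MeasurableEquiv.toLp 2 (Fin d → ℝ)).symm) (f ω))
      = (⇑((MeasurableEquiv.toLp 2 (Fin d → ℝ)).symm) ∘ f) from rfl,
    ← Measure.map_map (MeasurableEquiv.measurable _) hf, hlaw, stdGaussianE,
    Measure.map_map (MeasurableEquiv.measurable _) (MeasurableEquiv.measurable _)]
  simp

lemma coordIndep (hf : Measurable f) (hlaw : Measure.map f μ = stdGaussianE d) :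
    iIndepFun (fun (j : Fin d) ω => f ω j) μ := by
  have hP : Measurable (fun ω => ((MeasurableEquiv.toLp 2 (Fin d → ℝ)).symm) (f ω)) :=
    (MeasurableEquiv.measurable _).comp hf
  have hmap := map_equiv_comp hf hlaw
  have h := iIndepFun_comp_map (ι' := Fin d) hP (fun j => measurable_pi_apply j)
    (hmap ▸ iIndepFun_eval_pi (fun _ : Fin d => gaussianReal 0 1))
  exact h

lemma coordLaw (hf : Measurable f) (hlaw : Measure.map f μ = stdGaussianE d) (j : Fin d) :
    Measure.map (fun ω => f ω j) μ = gaussianReal 0 1 := by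
  have hP : Measurable (fun ω => ((MeasurableEquiv.toLp 2 (Fin d → ℝ)).symm) (f ω)) :=
    (MeasurableEquiv.measurable _).comp hf
  have h1 : (fun ω => f ω j)
      = (fun x : Fin d → ℝ => x j) ∘ (fun ω => ((MeasurableEquiv.toLp 2 (Fin d → ℝ)).symm) (f ω)) :=
    rfl
  rw [h1, ← Measure.map_map (measurable_pi_apply j) hP, map_equiv_comp hf hlaw,
    map_eval_pi (fun _ : Fin d => gaussianReal 0 1) j]


lemma card_filter_lt (d : ℕ) :
    (Finset.univ.filter (fun j : Fin d => (j:ℕ) < d - 1)).card = d - 1 := by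
  classical
  have h : Finset.univ.filter (fun j : Fin d => (j:ℕ) < d - 1)
      = Finset.univ.map (Fin.castLEEmb (Nat.sub_le d 1)) := by
    ext j
    simp only [Finset.mem_filter, Finset.mem_univ, true_and, Finset.mem_map]
    constructor
    · intro hj
      exact ⟨⟨(j:ℕ), hj⟩, by apply Fin.ext; simp [Fin.castLEEmb]⟩
    · rintro ⟨i, -, rfl⟩
      simpa [Fin.castLEEmb] using i.isLt
  rw [h, Finset.card_map, Finset.card_univ, Fintype.card_fin]

lemma Aeps_row_small {d : ℕ} (ε : ℝ) (x : EVec d) (j : Fin d) (hj : (j:ℕ) < d - 1) :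
    mvE (Aeps d ε) x j = 4⁻¹ * x j := by
  show (∑ k, Aeps d ε j k * x k) = 4⁻¹ * x j
  rw [Finset.sum_eq_single_of_mem j (Finset.mem_univ j)]
  · simp only [Aeps, Matrix.of_apply, hj, and_true, if_pos rfl]
    norm_num
  · intro k _ hk
    have h1 : ¬(j = k) := fun h => hk h.symm
    have h2 : ¬((j:ℕ) = d - 1) := by omega
    simp [Aeps, h1, h2]

lemma Aeps_row_last {d : ℕ} (hd : 2 ≤ d) (ε : ℝ) (x : EVec d) :
    mvE (Aeps d ε) x ⟨d - 1, Nat.sub_lt (by omega) Nat.one_pos⟩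
      = (-ε / Real.sqrt ((d:ℝ) - 1))
        * ∑ j ∈ Finset.univ.filter (fun j : Fin d => (j:ℕ) < d - 1), x j := by
  have hlt : d - 1 < d := by omega
  show (∑ k, Aeps d ε ⟨d - 1, hlt⟩ k * x k) = _
  have hterm : ∀ k : Fin d, Aeps d ε ⟨d - 1, hlt⟩ k * x k
      = if (k:ℕ) < d - 1 then (-ε / Real.sqrt ((d:ℝ) - 1)) * x k else 0 := by
    intro k
    by_cases hk : (k:ℕ) < d - 1
    · have hne : (⟨d - 1, hlt⟩ : Fin d) ≠ k := by
        intro h'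
        have := congrArg Fin.val h'
        simp at this
        omega
      simp [Aeps, hk, hne]
    · simp [Aeps, hk]
  simp_rw [hterm]
  rw [Finset.mul_sum, Finset.sum_filter]


end ReluAux

open ReluAux

/-- For the ReLU dynamical system with matrix `A(ε)` and i.i.d. standard
Gaussian noise, the inner product of the last row `a_d(ε)` of `A(ε)` with `X_t` is positive
with probability at most `C₀ exp(−C₁ d)`, for universal constants `C₀, C₁ > 0`.
Note `⟨a_d(ε), X_t⟩ = (A(ε) X_t)_{d-1}`. -/
theorem relu_last_coordinate_negativity :
    ∃ C₀ C₁ : ℝ, 0 < C₀ ∧ 0 < C₁ ∧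
      ∀ (d : ℕ) (hd : 2 ≤ d) (ε : ℝ), 0 < ε →
      ∀ (Ω : Type) (_ : MeasurableSpace Ω) (μ : Measure Ω), IsProbabilityMeasure μ →
      ∀ (η : ℕ → Ω → EVec d) (X : ℕ → Ω → EVec d),
        (∀ t, Measurable (η t)) →
        iIndepFun η μ →
        (∀ t, Measure.map (η t) μ = stdGaussianE d) →
        (∀ ω, X 0 ω = 0) →
        (∀ t ω, X (t + 1) ω = phiV (fun x => max x 0) (mvE (Aeps d ε) (X t ω)) + η t ω) →
        ∀ t : ℕ, 2 ≤ t →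
          (μ {ω | 0 < mvE (Aeps d ε) (X t ω) ⟨d - 1, by omega⟩}).toReal ≤
            C₀ * Real.exp (-C₁ * d) := by
  refine ⟨2, (13000:ℝ)⁻¹, by norm_num, by norm_num, ?_⟩
  intro d hd ε hε Ω mΩ μ hμ η X hηm hηind hηlaw hX0 hXrec t ht
  obtain ⟨r, rfl⟩ : ∃ r, t = r + 2 := ⟨t - 2, by omega⟩
  classical
  set s : Finset (Fin d) := Finset.univ.filter (fun j : Fin d => (j:ℕ) < d - 1) with hs
  have hcard : s.card = d - 1 := card_filter_lt d
  set σ : ℝ := (80:ℝ)⁻¹ with hσ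
  set R : Fin d → Ω → ℝ := fun j ω => max (4⁻¹ * η r ω j) 0 with hRdef
  set G : Fin d → Ω → ℝ := fun j ω => η (r+1) ω j with hGdef
  have hGmeas : ∀ j, Measurable (G j) := fun j => (measurable_pi_apply j).comp ((WithLp.measurable_ofLp 2 _).comp (hηm (r+1)))
  have hRmeas : ∀ j, Measurable (R j) := fun j =>
    (((measurable_pi_apply j).comp ((WithLp.measurable_ofLp 2 _).comp (hηm r))).const_mul 4⁻¹).max measurable_const
  have hGind : iIndepFun G μ := coordIndep (hηm (r+1)) (hηlaw (r+1))
  have hRind : iIndepFun R μ := by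
    have := (coordIndep (hηm r) (hηlaw r)).comp (fun j (x:ℝ) => max (4⁻¹ * x) 0)
      (fun j => (measurable_id.const_mul _).max measurable_const)
    exact this
  have hGlaw : ∀ j, Measure.map (G j) μ = gaussianReal 0 1 :=
    fun j => coordLaw (hηm (r+1)) (hηlaw (r+1)) j
  have hRGlaw : ∀ j, Measure.map (fun ω => η r ω j) μ = gaussianReal 0 1 :=
    fun j => coordLaw (hηm r) (hηlaw r) j
  -- mgf of each G coordinate
  have hmgfG : ∀ j, mgf (G j) μ (-σ) = rexp (σ^2/2) := by
    intro j
    have h2 : ∫ x, rexp (-σ * x) ∂(Measure.map (G j) μ) = ∫ ω, rexp (-σ * G j ω) ∂μ :=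
      integral_map (hGmeas j).aemeasurable
        ((continuous_exp.comp (continuous_const.mul continuous_id)).aestronglyMeasurable)
    rw [mgf, ← h2, hGlaw j, integral_exp_mul_gaussianReal (-σ), neg_pow]
    norm_num
  have hmgfR : ∀ j, mgf (R j) μ (-σ) ≤ rexp (-(6420:ℝ)⁻¹) := by
    intro j
    have hcont : Continuous (fun x : ℝ => rexp (-σ * max (4⁻¹ * x) 0)) :=
      continuous_exp.comp (continuous_const.mul ((continuous_const.mul continuous_id).max
        continuous_const))
    have h2 : ∫ x, rexp (-σ * max (4⁻¹ * x) 0) ∂(Measure.map (fun ω => η r ω j) μ)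
        = ∫ ω, rexp (-σ * R j ω) ∂μ :=
      integral_map ((measurable_pi_apply j).comp ((WithLp.measurable_ofLp 2 _).comp (hηm r))).aemeasurable
        hcont.aestronglyMeasurable
    rw [mgf, ← h2, hRGlaw j, hσ]
    exact mgfR_bound
  -- integrability
  have hintGj : ∀ j ∈ s, Integrable (fun ω => rexp (-σ * G j ω)) μ := by
    intro j _
    have h1 : (fun ω => rexp (-σ * G j ω)) = (fun x : ℝ => rexp (-σ * x)) ∘ (G j) := rfl
    rw [h1]
    refine (integrable_map_measure ?_ (hGmeas j).aemeasurable).mp ?_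
    · rw [hGlaw j]
      exact (continuous_exp.comp (continuous_const.mul continuous_id)).aestronglyMeasurable
    · rw [hGlaw j]
      exact ReluAux.integrable_exp_mul_gaussianReal (-σ)
  have hintRj : ∀ j ∈ s, Integrable (fun ω => rexp (-σ * R j ω)) μ := by
    intro j _
    refine Integrable.mono' (integrable_const 1)
      ((((hRmeas j).const_mul (-σ)).exp).aestronglyMeasurable) (ae_of_all _ fun ω => ?_)
    rw [Real.norm_eq_abs, Real.abs_exp]
    rw [Real.exp_le_one_iff]
    have h0 : (0:ℝ) ≤ R j ω := le_max_right _ _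
    have hσ0 : (0:ℝ) ≤ σ := by rw [hσ]; norm_num
    nlinarith
  have hintSumG : Integrable (fun ω => rexp (-σ * (∑ j ∈ s, G j) ω)) μ :=
    hGind.integrable_exp_mul_sum hGmeas hintGj
  have hintSumR : Integrable (fun ω => rexp (-σ * (∑ j ∈ s, R j) ω)) μ :=
    hRind.integrable_exp_mul_sum hRmeas hintRj
  -- independence of the two block sums
  have hpair : IndepFun (η r) (η (r+1)) μ := hηind.indepFun (by omega)
  have hφm : Measurable (fun u : EVec d => ∑ j ∈ s, max (4⁻¹ * u j) 0) :=
    Finset.measurable_sum s (fun j _ => (((measurable_pi_apply j).comp (WithLp.measurable_ofLp 2 _)).const_mul _).max measurable_const)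
  have hψm : Measurable (fun u : EVec d => ∑ j ∈ s, u j) :=
    Finset.measurable_sum s (fun j _ => (measurable_pi_apply j).comp (WithLp.measurable_ofLp 2 _))
  have hsums_indep : IndepFun (∑ j ∈ s, R j) (∑ j ∈ s, G j) μ := by
    have h2 := hpair.comp hφm hψm
    have e1 : (∑ j ∈ s, R j) = (fun u : EVec d => ∑ j ∈ s, max (4⁻¹ * u j) 0) ∘ (η r) := by
      funext ω; simp [Finset.sum_apply, hRdef, Function.comp]
    have e2 : (∑ j ∈ s, G j) = (fun u : EVec d => ∑ j ∈ s, u j) ∘ (η (r+1)) := by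
      funext ω; simp [Finset.sum_apply, hGdef, Function.comp]
    rw [e1, e2]; exact h2
  set TT : Ω → ℝ := (∑ j ∈ s, R j) + (∑ j ∈ s, G j) with hTT
  have hintT : Integrable (fun ω => rexp (-σ * TT ω)) μ :=
    hsums_indep.integrable_exp_mul_add hintSumR hintSumG
  have hcher := measure_le_le_exp_mul_mgf (μ := μ) (X := TT) 0
    (by rw [hσ]; norm_num : -σ ≤ 0) hintT
  -- mgf factorization and bound
  have hSRmeas : AEStronglyMeasurable (fun ω => rexp (-σ * (∑ j ∈ s, R j) ω)) μ :=
    hintSumR.aestronglyMeasurable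
  have hSGmeas : AEStronglyMeasurable (fun ω => rexp (-σ * (∑ j ∈ s, G j) ω)) μ :=
    hintSumG.aestronglyMeasurable
  have hmgfT : mgf TT μ (-σ) ≤ rexp (-(13000:ℝ)⁻¹) ^ (d-1) := by
    rw [hTT, IndepFun.mgf_add hsums_indep hSRmeas hSGmeas,
      hRind.mgf_sum hRmeas s, hGind.mgf_sum hGmeas s]
    have hb1 : (∏ j ∈ s, mgf (R j) μ (-σ)) ≤ rexp (-(6420:ℝ)⁻¹) ^ (d-1) := by
      rw [← hcard, ← Finset.prod_const]
      exact Finset.prod_le_prod (fun j _ => mgf_nonneg) (fun j _ => hmgfR j)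
    have hb2 : (∏ j ∈ s, mgf (G j) μ (-σ)) = rexp (σ^2/2) ^ (d-1) := by
      rw [← hcard, ← Finset.prod_const]
      exact Finset.prod_congr rfl (fun j _ => hmgfG j)
    calc (∏ j ∈ s, mgf (R j) μ (-σ)) * ∏ j ∈ s, mgf (G j) μ (-σ)
        ≤ rexp (-(6420:ℝ)⁻¹) ^ (d-1) * rexp (σ^2/2) ^ (d-1) := by
          rw [hb2]
          exact mul_le_mul_of_nonneg_right hb1 (by positivity)
      _ = (rexp (-(6420:ℝ)⁻¹) * rexp (σ^2/2)) ^ (d-1) := by rw [mul_pow]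
      _ ≤ rexp (-(13000:ℝ)⁻¹) ^ (d-1) := by
          apply pow_le_pow_left₀ (by positivity)
          rw [hσ]; exact combine_exp
  -- event inclusion
  have hpoint : ∀ ω, ∀ j ∈ s, R j ω + G j ω ≤ X (r+2) ω j := by
    intro ω j hj
    have hjlt : (j:ℕ) < d - 1 := (Finset.mem_filter.mp hj).2
    have h1 : X (r+2) ω j = max (4⁻¹ * X (r+1) ω j) 0 + η (r+1) ω j := by
      rw [hXrec (r+1) ω]
      have e : (phiV (fun x => max x 0) (mvE (Aeps d ε) (X (r+1) ω)) + η (r+1) ω) j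
          = max ((mvE (Aeps d ε) (X (r+1) ω)) j) 0 + η (r+1) ω j := rfl
      rw [e, Aeps_row_small ε _ j hjlt]
    have h2 : η r ω j ≤ X (r+1) ω j := by
      rw [hXrec r ω]
      have e : (phiV (fun x => max x 0) (mvE (Aeps d ε) (X r ω)) + η r ω) j
          = max ((mvE (Aeps d ε) (X r ω)) j) 0 + η r ω j := rfl
      rw [e]
      nlinarith [le_max_right ((mvE (Aeps d ε) (X r ω)) j) (0:ℝ)]
    rw [h1]
    have h3 : max (4⁻¹ * η r ω j) 0 ≤ max (4⁻¹ * X (r+1) ω j) 0 :=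
      max_le_max (by nlinarith) le_rfl
    show max (4⁻¹ * η r ω j) 0 + η (r+1) ω j ≤ _
    linarith
  have hsub : {ω | 0 < mvE (Aeps d ε) (X (r+2) ω) ⟨d - 1, by omega⟩} ⊆ {ω | TT ω ≤ 0} := by
    intro ω hω
    simp only [Set.mem_setOf_eq] at hω ⊢
    rw [Aeps_row_last hd ε] at hω
    have hsq : (0:ℝ) < Real.sqrt ((d:ℝ) - 1) := Real.sqrt_pos.mpr (by
      have : (2:ℝ) ≤ (d:ℝ) := by exact_mod_cast hd
      linarith)
    have hcneg : -ε / Real.sqrt ((d:ℝ)-1) < 0 :=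
      div_neg_of_neg_of_pos (neg_lt_zero.mpr hε) hsq
    have hSneg : (∑ j ∈ s, X (r+2) ω j) < 0 := by
      rcases mul_pos_iff.mp hω with ⟨h1, h2⟩ | ⟨h1, h2⟩
      · exact absurd h1 (not_lt.mpr hcneg.le)
      · exact h2
    have hTle : TT ω ≤ ∑ j ∈ s, X (r+2) ω j := by
      have e : TT ω = ∑ j ∈ s, (R j ω + G j ω) := by
        rw [hTT]
        simp [Finset.sum_apply, Finset.sum_add_distrib]
      rw [e]
      exact Finset.sum_le_sum (hpoint ω)
    linarith
  -- final combination
  calc (μ {ω | 0 < mvE (Aeps d ε) (X (r+2) ω) ⟨d - 1, by omega⟩}).toReal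
      ≤ (μ {ω | TT ω ≤ 0}).toReal :=
        ENNReal.toReal_mono (measure_ne_top μ _) (measure_mono hsub)
    _ ≤ rexp (-(-σ) * 0) * mgf TT μ (-σ) := hcher
    _ = mgf TT μ (-σ) := by simp
    _ ≤ rexp (-(13000:ℝ)⁻¹) ^ (d-1) := hmgfT
    _ ≤ 2 * rexp (-(13000:ℝ)⁻¹ * d) := by
        rw [← Real.exp_nat_mul]
        have h1 : ((d-1 : ℕ) : ℝ) = (d:ℝ) - 1 := by
          have h2 : (1:ℕ) ≤ d := by omega
          push_cast [Nat.cast_sub h2]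
          ring
        rw [h1]
        have h3 : ((d:ℝ) - 1) * (-(13000:ℝ)⁻¹) = (13000:ℝ)⁻¹ + (-(13000:ℝ)⁻¹ * d) := by ring
        rw [h3, Real.exp_add]
        have h2 := exp_small_le_two
        nlinarith [Real.exp_pos (-(13000:ℝ)⁻¹ * (d:ℝ))]

end
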